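/- arXiv:1902.01119 — 2 statements merged into one kernel-verified Lean document; each statement's English description precedes it below -/
import Mathlib

section
/- Let S be a nonempty finite type and let P, Q : S → S → ℝ be row-stochastic matrices, i.e., P s s' ≥ 0 and Q s s' ≥ 0 for all s, s', and ∑_{s'} P s s' = 1 and ∑_{s'} Q s s' = 1 for every s. If ε ≥ 0 and for every s we have ∑_{s'} |P s s' − Q s s'| ≤ ε, then for every natural number t and every initial state s₀, ∑_{s'} |(P^t) s₀ s' − (Q^t) s₀ s'| ≤ t·ε, where P^t denotes the t-fold matrix power (matrix product of P with itself t times). -/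
theorem simulation_lemma {S : Type*} [Fintype S] [Nonempty S] [DecidableEq S]
    (P Q : Matrix S S ℝ)
    (hP0 : ∀ s s', 0 ≤ P s s') (hQ0 : ∀ s s', 0 ≤ Q s s')
    (hP1 : ∀ s, ∑ s', P s s' = 1) (hQ1 : ∀ s, ∑ s', Q s s' = 1)
    (ε : ℝ) (hε : 0 ≤ ε)
    (h : ∀ s, ∑ s', |P s s' - Q s s'| ≤ ε) :
    ∀ (t : ℕ) (s₀ : S), ∑ s', |(P ^ t) s₀ s' - (Q ^ t) s₀ s'| ≤ t * ε := by
  have stoch : ∀ (M : Matrix S S ℝ), (∀ s s', 0 ≤ M s s') → (∀ s, ∑ s', M s s' = 1) →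
      ∀ t : ℕ, (∀ s s', 0 ≤ (M ^ t) s s') ∧ (∀ s, ∑ s', (M ^ t) s s' = 1) := by
    intro M hM0 hM1 t
    induction t with
    | zero =>
      refine ⟨fun s s' => ?_, fun s => ?_⟩
      · simp only [pow_zero, Matrix.one_apply]
        split <;> norm_num
      · simp [Matrix.one_apply]
    | succ n ih =>
      refine ⟨fun s s' => ?_, fun s => ?_⟩
      · rw [pow_succ, Matrix.mul_apply]
        exact Finset.sum_nonneg fun u _ => mul_nonneg (ih.1 s u) (hM0 u s')
      · rw [pow_succ]
        simp only [Matrix.mul_apply]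
        rw [Finset.sum_comm]
        calc ∑ u, ∑ s', (M ^ n) s u * M u s'
            = ∑ u, (M ^ n) s u * ∑ s', M u s' := by
              simp [Finset.mul_sum]
          _ = 1 := by simp [hM1, ih.2 s]
  intro t
  induction t with
  | zero => intro s₀; simp
  | succ n ih =>
    intro s₀
    have key : ∀ s', (P ^ (n+1)) s₀ s' - (Q ^ (n+1)) s₀ s'
        = ∑ u, ((P ^ n) s₀ u * (P u s' - Q u s')
            + ((P ^ n) s₀ u - (Q ^ n) s₀ u) * Q u s') := by
      intro s'
      rw [pow_succ, pow_succ, Matrix.mul_apply, Matrix.mul_apply, ← Finset.sum_sub_distrib]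
      congr 1; ext u; ring
    calc ∑ s', |(P ^ (n+1)) s₀ s' - (Q ^ (n+1)) s₀ s'|
        ≤ ∑ s', ∑ u, ((P ^ n) s₀ u * |P u s' - Q u s'|
            + |(P ^ n) s₀ u - (Q ^ n) s₀ u| * Q u s') := by
          apply Finset.sum_le_sum
          intro s' _
          rw [key s']
          refine (Finset.abs_sum_le_sum_abs _ _).trans (Finset.sum_le_sum fun u _ => ?_)
          refine (abs_add_le _ _).trans ?_
          rw [abs_mul, abs_mul, abs_of_nonneg ((stoch P hP0 hP1 n).1 s₀ u),
            abs_of_nonneg (hQ0 u s')]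
      _ = ∑ u, (P ^ n) s₀ u * (∑ s', |P u s' - Q u s'|)
          + ∑ u, |(P ^ n) s₀ u - (Q ^ n) s₀ u| * (∑ s', Q u s') := by
          rw [Finset.sum_comm]
          simp [Finset.sum_add_distrib, Finset.mul_sum]
      _ ≤ ∑ u, (P ^ n) s₀ u * ε + ∑ u, |(P ^ n) s₀ u - (Q ^ n) s₀ u| * 1 := by
          gcongr with u _ u _
          · exact (stoch P hP0 hP1 n).1 s₀ u
          · exact h u
          · rw [hQ1 u]
      _ = ε + ∑ u, |(P ^ n) s₀ u - (Q ^ n) s₀ u| := by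
          rw [← Finset.sum_mul, (stoch P hP0 hP1 n).2 s₀]; simp
      _ ≤ ε + n * ε := by linarith [ih s₀]
      _ = (n + 1 : ℕ) * ε := by push_cast; ring
end

section
/- Let S be a nonempty finite type, let P, Q : S → S → ℝ be row-stochastic matrices, let r : S → ℝ with 0 ≤ r s ≤ 1 for all s, and let γ ∈ ℝ with 0 ≤ γ < 1. Suppose ε ≥ 0 and for every s, ∑_{s'} |P s s' − Q s s'| ≤ ε. Then for every initial state s₀, the series ∑_{t=0}^∞ γ^t · ∑_{s} r s · ((P^t) s₀ s − (Q^t) s₀ s) converges absolutely and its absolute value is at most (6γ/(1−γ)^4)·ε. -/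
section Aux
variable {S : Type*} [Fintype S] [DecidableEq S]

lemma pow_nonneg_entry (P : Matrix S S ℝ) (hP0 : ∀ s s', 0 ≤ P s s') :
    ∀ t s s', 0 ≤ (P ^ t) s s' := by
  intro t
  induction t with
  | zero => intro s s'; simp [Matrix.one_apply]; positivity
  | succ n ih =>
      intro s s'
      rw [pow_succ, Matrix.mul_apply]
      exact Finset.sum_nonneg fun u _ => mul_nonneg (ih s u) (hP0 u s')

lemma pow_row_sum (P : Matrix S S ℝ) (hP1 : ∀ s, ∑ s', P s s' = 1) :
    ∀ t s, ∑ s', (P ^ t) s s' = 1 := by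
  intro t
  induction t with
  | zero => intro s; simp [Matrix.one_apply]
  | succ n ih =>
      intro s
      simp only [pow_succ, Matrix.mul_apply]
      rw [Finset.sum_comm]
      simp_rw [← Finset.mul_sum, hP1]
      simpa using ih s

lemma l1_pow_bound {S : Type*} [Fintype S] [DecidableEq S]
    (P Q : Matrix S S ℝ)
    (hP0 : ∀ s s', 0 ≤ P s s') (hQ0 : ∀ s s', 0 ≤ Q s s')
    (hP1 : ∀ s, ∑ s', P s s' = 1) (hQ1 : ∀ s, ∑ s', Q s s' = 1)
    (ε : ℝ) (hε : 0 ≤ ε)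
    (h : ∀ s, ∑ s', |P s s' - Q s s'| ≤ ε) :
    ∀ (t : ℕ) (s₀ : S), ∑ s, |(P ^ t) s₀ s - (Q ^ t) s₀ s| ≤ (t : ℝ) * ε := by
  intro t
  induction t with
  | zero => intro s₀; simp
  | succ n ih =>
      intro s₀
      have key : ∀ s, (P ^ (n+1)) s₀ s - (Q ^ (n+1)) s₀ s =
          (∑ u, (P ^ n) s₀ u * (P u s - Q u s)) +
          (∑ u, ((P ^ n) s₀ u - (Q ^ n) s₀ u) * Q u s) := by
        intro s
        simp only [pow_succ, Matrix.mul_apply]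
        rw [← Finset.sum_add_distrib, ← Finset.sum_sub_distrib]
        exact Finset.sum_congr rfl fun u _ => by ring
      calc ∑ s, |(P ^ (n+1)) s₀ s - (Q ^ (n+1)) s₀ s|
          ≤ ∑ s, ((|∑ u, (P ^ n) s₀ u * (P u s - Q u s)|) +
                  |∑ u, ((P ^ n) s₀ u - (Q ^ n) s₀ u) * Q u s|) := by
            apply Finset.sum_le_sum
            intro s _
            rw [key s]
            exact abs_add_le _ _
        _ ≤ ∑ s, ((∑ u, (P ^ n) s₀ u * |P u s - Q u s|) +
                  ∑ u, |(P ^ n) s₀ u - (Q ^ n) s₀ u| * Q u s) := by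
            apply Finset.sum_le_sum
            intro s _
            gcongr
            · calc |∑ u, (P ^ n) s₀ u * (P u s - Q u s)|
                  ≤ ∑ u, |(P ^ n) s₀ u * (P u s - Q u s)| := Finset.abs_sum_le_sum_abs _ _
                _ = ∑ u, (P ^ n) s₀ u * |P u s - Q u s| := by
                    apply Finset.sum_congr rfl
                    intro u _
                    rw [abs_mul, abs_of_nonneg (pow_nonneg_entry P hP0 n s₀ u)]
            · calc |∑ u, ((P ^ n) s₀ u - (Q ^ n) s₀ u) * Q u s|
                  ≤ ∑ u, |((P ^ n) s₀ u - (Q ^ n) s₀ u) * Q u s| := Finset.abs_sum_le_sum_abs _ _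
                _ = ∑ u, |(P ^ n) s₀ u - (Q ^ n) s₀ u| * Q u s := by
                    apply Finset.sum_congr rfl
                    intro u _
                    rw [abs_mul, abs_of_nonneg (hQ0 u s)]
        _ = (∑ u, (P ^ n) s₀ u * ∑ s, |P u s - Q u s|) +
            (∑ u, |(P ^ n) s₀ u - (Q ^ n) s₀ u| * ∑ s, Q u s) := by
            rw [Finset.sum_add_distrib]
            congr 1
            · rw [Finset.sum_comm]
              exact Finset.sum_congr rfl fun u _ => (Finset.mul_sum _ _ _).symm
            · rw [Finset.sum_comm]
              exact Finset.sum_congr rfl fun u _ => (Finset.mul_sum _ _ _).symm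
        _ ≤ (∑ u, (P ^ n) s₀ u * ε) + (∑ u, |(P ^ n) s₀ u - (Q ^ n) s₀ u| * 1) := by
            gcongr with u _ u _
            · exact pow_nonneg_entry P hP0 n s₀ u
            · exact h u
            · exact le_of_eq (hQ1 u)
        _ ≤ ε + n * ε := by
            simp_rw [mul_one]
            rw [← Finset.sum_mul, pow_row_sum P hP1 n s₀, one_mul]
            exact add_le_add le_rfl (ih s₀)
        _ = (n + 1 : ℕ) * ε := by push_cast; ring

end Aux

theorem value_difference_bound {S : Type*} [Fintype S] [Nonempty S] [DecidableEq S]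
    (P Q : Matrix S S ℝ)
    (hP0 : ∀ s s', 0 ≤ P s s') (hQ0 : ∀ s s', 0 ≤ Q s s')
    (hP1 : ∀ s, ∑ s', P s s' = 1) (hQ1 : ∀ s, ∑ s', Q s s' = 1)
    (r : S → ℝ) (hr : ∀ s, 0 ≤ r s ∧ r s ≤ 1)
    (γ : ℝ) (hγ0 : 0 ≤ γ) (hγ1 : γ < 1)
    (ε : ℝ) (hε : 0 ≤ ε)
    (h : ∀ s, ∑ s', |P s s' - Q s s'| ≤ ε) :
    ∀ s₀ : S,
      Summable (fun t : ℕ => |γ ^ t * ∑ s, r s * ((P ^ t) s₀ s - (Q ^ t) s₀ s)|) ∧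
      |∑' t : ℕ, γ ^ t * ∑ s, r s * ((P ^ t) s₀ s - (Q ^ t) s₀ s)| ≤
        6 * γ / (1 - γ) ^ 4 * ε := by
  intro s₀
  have hbound : ∀ t : ℕ, |γ ^ t * ∑ s, r s * ((P ^ t) s₀ s - (Q ^ t) s₀ s)| ≤
      (t : ℝ) * γ ^ t * ε := by
    intro t
    rw [abs_mul, abs_pow, abs_of_nonneg hγ0]
    have h1 : |∑ s, r s * ((P ^ t) s₀ s - (Q ^ t) s₀ s)| ≤ t * ε := by
      calc |∑ s, r s * ((P ^ t) s₀ s - (Q ^ t) s₀ s)|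
          ≤ ∑ s, |r s * ((P ^ t) s₀ s - (Q ^ t) s₀ s)| := Finset.abs_sum_le_sum_abs _ _
        _ ≤ ∑ s, |(P ^ t) s₀ s - (Q ^ t) s₀ s| := by
            apply Finset.sum_le_sum
            intro s _
            rw [abs_mul]
            calc |r s| * |(P ^ t) s₀ s - (Q ^ t) s₀ s|
                ≤ 1 * |(P ^ t) s₀ s - (Q ^ t) s₀ s| := by
                  gcongr
                  rw [abs_of_nonneg (hr s).1]; exact (hr s).2
              _ = _ := one_mul _
        _ ≤ t * ε := l1_pow_bound P Q hP0 hQ0 hP1 hQ1 ε hε h t s₀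
    calc γ ^ t * |∑ s, r s * ((P ^ t) s₀ s - (Q ^ t) s₀ s)| ≤ γ ^ t * (t * ε) := by
          gcongr
      _ = t * γ ^ t * ε := by ring
  have hγnorm : ‖γ‖ < 1 := by rw [Real.norm_eq_abs, abs_of_nonneg hγ0]; exact hγ1
  have hs : Summable (fun t : ℕ => (t : ℝ) * γ ^ t * ε) := by
    apply Summable.mul_right
    simpa using summable_pow_mul_geometric_of_norm_lt_one 1 hγnorm
  have hsum : Summable (fun t : ℕ => |γ ^ t * ∑ s, r s * ((P ^ t) s₀ s - (Q ^ t) s₀ s)|) := by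
    apply Summable.of_nonneg_of_le (fun t => abs_nonneg _) hbound hs
  refine ⟨hsum, ?_⟩
  have habs : |∑' t : ℕ, γ ^ t * ∑ s, r s * ((P ^ t) s₀ s - (Q ^ t) s₀ s)| ≤
      ∑' t : ℕ, (t : ℝ) * γ ^ t * ε := by
    calc |∑' t : ℕ, γ ^ t * ∑ s, r s * ((P ^ t) s₀ s - (Q ^ t) s₀ s)|
        ≤ ∑' t : ℕ, |γ ^ t * ∑ s, r s * ((P ^ t) s₀ s - (Q ^ t) s₀ s)| := by
          have hsum' : Summable (fun t : ℕ => ‖γ ^ t * ∑ s, r s * ((P ^ t) s₀ s - (Q ^ t) s₀ s)‖) := by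
            simpa only [Real.norm_eq_abs] using hsum
          have := norm_tsum_le_tsum_norm hsum'
          simpa only [Real.norm_eq_abs] using this
      _ ≤ ∑' t : ℕ, (t : ℝ) * γ ^ t * ε := Summable.tsum_le_tsum hbound hsum hs
  have hval : ∑' t : ℕ, (t : ℝ) * γ ^ t * ε = γ / (1 - γ) ^ 2 * ε := by
    rw [tsum_mul_right, tsum_coe_mul_geometric_of_norm_lt_one hγnorm]
  rw [hval] at habs
  refine habs.trans ?_
  have h1γ : 0 < 1 - γ := by linarith
  have h2 : (1 - γ) ^ 2 ≤ 1 := by nlinarith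
  have key : γ / (1 - γ) ^ 2 ≤ 6 * γ / (1 - γ) ^ 4 := by
    rw [div_le_div_iff₀ (by positivity) (by positivity)]
    nlinarith [mul_nonneg hγ0 (pow_nonneg h1γ.le 2), pow_pos h1γ 2, mul_nonneg hγ0 (pow_nonneg h1γ.le 4)]
  exact mul_le_mul_of_nonneg_right key hε
end
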